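/- Let G = (V, E) be a finite directed graph with edge weights w : E → ℝ≥0, a source vertex s ∈ V, and a terminal set D ⊆ V. Let G' = (V', E') be the vertex-split graph of G: each vertex v with outgoing edges e_1, …, e_k is replaced by copies v_1, …, v_k, each copy v_j carries exactly the one outgoing edge corresponding to e_j (with the same weight and with head replaced by every copy of the original head, preserving weights), and every edge entering v in G yields an edge entering every copy v_j in G' with the same weight; a set D' of terminal copy-classes corresponds to D, where a copy-class counts as reached if any one of its copies is reached. Then the minimum, over edge sets F' ⊆ E' such that from some copy of s every terminal copy-class of D' is reachable, of the problem-P activation cost Σ_{v' ∈ V'} max{ w(e) : e ∈ F' outgoing from v' } equals the minimum, over edge sets F ⊆ E such that every terminal in D is reachable from s using only edges of F, of the total weight Σ_{e ∈ F} w(e). -/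

import Mathlib

open Finset

/-- Reachability from `a` to `b` in a directed graph (edges given by their tail map `tl`
and head map `hd`) using only edges belonging to `F`. -/
def Reach {V E : Type*} (tl hd : E → V) (F : Finset E) (a b : V) : Prop :=
  Relation.ReflTransGen (fun x y => ∃ e ∈ F, tl e = x ∧ hd e = y) a b

/-- The original vertex ("copy-class") of a copy in the vertex-split graph.
The copies of a vertex `v` are: `Sum.inr e` for each outgoing edge `e` of `v`
(the copy carrying the single outgoing edge `e`), together with `Sum.inl v`
(a copy with no outgoing edge, needed so that vertices with no outgoing edge
still have a copy). -/
def cls {V E : Type*} (tl : E → V) : V ⊕ E → V := Sum.elim id tl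

/-- Let `G = (V, E)` be a finite weighted directed graph with
weights `w : E → ℝ≥0`, source `s` and terminal set `D`.  In the vertex-split graph
`G'` the vertices are the copies `V ⊕ E` (with copy-class `cls tl`), and the edges are
the pairs `p = (e, c)` with `cls tl c = hd e`: the edge corresponding to `e` going out
of the copy `Sum.inr e` of `tl e` that carries `e`, into the copy `c` of `hd e`, with
weight `w e`.  Thus each copy inherits all incoming edges of its original vertex but
carries (duplicates, one per copy of the head, of) exactly one outgoing edge.
Then the minimum, over edge sets `F'` in `G'` through which every terminal copy-class
is reachable from a copy of `s`, of the problem-P activation cost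
`∑_{c} max { w e : (e, c') ∈ F' outgoing from c }`, equals the minimum, over edge
sets `F ⊆ E` through which every terminal of `D` is reachable from `s`, of the total
weight `∑_{e ∈ F} w e`. -/
lemma reach_to_split {V E : Type} [DecidableEq E]
    (tl hd : E → V) (F : Finset E) (F' : Finset (E × (V ⊕ E)))
    (hmem : ∀ e ∈ F, ∀ c : V ⊕ E, cls tl c = hd e → (e, c) ∈ F')
    {a b : V} (h : Reach tl hd F a b) :
    ∀ c : V ⊕ E, cls tl c = b →
      ∃ c₀ : V ⊕ E, cls tl c₀ = a ∧
        Reach (fun p : E × (V ⊕ E) => (Sum.inr p.1 : V ⊕ E)) (fun p => p.2) F' c₀ c := by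
  induction h using Relation.ReflTransGen.head_induction_on with
  | refl => exact fun c hc => ⟨c, hc, Relation.ReflTransGen.refl⟩
  | head hstep _ ih =>
    intro c hc
    obtain ⟨e, heF, hte, hhe⟩ := hstep
    obtain ⟨c₀', hc₀', hr⟩ := ih c hc
    refine ⟨Sum.inr e, hte, Relation.ReflTransGen.head ?_ hr⟩
    exact ⟨(e, c₀'), hmem e heF c₀' (hc₀'.trans hhe.symm), rfl, rfl⟩

lemma split_to_reach {V E : Type} [DecidableEq E]
    (tl hd : E → V) (F' : Finset (E × (V ⊕ E)))
    (hcl : ∀ p ∈ F', cls tl p.2 = hd p.1)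
    {c₀ c : V ⊕ E}
    (h : Reach (fun p : E × (V ⊕ E) => (Sum.inr p.1 : V ⊕ E)) (fun p => p.2) F' c₀ c) :
    Reach tl hd (F'.image Prod.fst) (cls tl c₀) (cls tl c) := by
  induction h with
  | refl => exact Relation.ReflTransGen.refl
  | tail _ hstep ih =>
    obtain ⟨p, hp, htail, hhead⟩ := hstep
    refine ih.tail ⟨p.1, Finset.mem_image_of_mem _ hp, ?_, ?_⟩
    · rw [← htail]; rfl
    · rw [← hhead]; exact (hcl p hp).symm

theorem split_reduction_optima_eq
    {V E : Type} [Fintype V] [Fintype E] [DecidableEq V] [DecidableEq E]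
    (tl hd : E → V) (w : E → NNReal) (s : V) (D : Finset V) :
    sInf {x : NNReal |
        ∃ F' : Finset (E × (V ⊕ E)),
          (∀ p ∈ F', cls tl p.2 = hd p.1) ∧
          (∀ d ∈ D, ∃ c₀ c : V ⊕ E, cls tl c₀ = s ∧ cls tl c = d ∧
              Reach (fun p : E × (V ⊕ E) => (Sum.inr p.1 : V ⊕ E))
                (fun p => p.2) F' c₀ c) ∧
          x = ∑ c : V ⊕ E,
                (F'.filter fun p => (Sum.inr p.1 : V ⊕ E) = c).sup fun p => w p.1} =
    sInf {x : NNReal |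
        ∃ F : Finset E, (∀ d ∈ D, Reach tl hd F s d) ∧ x = ∑ e ∈ F, w e} := by
  set S1 : Set NNReal := {x : NNReal |
        ∃ F' : Finset (E × (V ⊕ E)),
          (∀ p ∈ F', cls tl p.2 = hd p.1) ∧
          (∀ d ∈ D, ∃ c₀ c : V ⊕ E, cls tl c₀ = s ∧ cls tl c = d ∧
              Reach (fun p : E × (V ⊕ E) => (Sum.inr p.1 : V ⊕ E))
                (fun p => p.2) F' c₀ c) ∧
          x = ∑ c : V ⊕ E,
                (F'.filter fun p => (Sum.inr p.1 : V ⊕ E) = c).sup fun p => w p.1} with hS1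
  set S2 : Set NNReal := {x : NNReal |
        ∃ F : Finset E, (∀ d ∈ D, Reach tl hd F s d) ∧ x = ∑ e ∈ F, w e} with hS2
  -- S2 ⊆ S1
  have hsub : S2 ⊆ S1 := by
    rintro x ⟨F, hreach, rfl⟩
    refine ⟨(F ×ˢ (univ : Finset (V ⊕ E))).filter (fun p => cls tl p.2 = hd p.1),
      fun p hp => (Finset.mem_filter.mp hp).2, ?_, ?_⟩
    · intro d hd'
      have := reach_to_split tl hd F
        ((F ×ˢ (univ : Finset (V ⊕ E))).filter (fun p => cls tl p.2 = hd p.1))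
        (by intro e he c hc
            simp only [Finset.mem_filter, Finset.mem_product]
            exact ⟨⟨he, Finset.mem_univ _⟩, hc⟩)
        (hreach d hd') (Sum.inl d) rfl
      obtain ⟨c₀, hc₀, hr⟩ := this
      exact ⟨c₀, Sum.inl d, hc₀, rfl, hr⟩
    · rw [Fintype.sum_sum_type]
      have h1 : ∀ v : V,
          (((F ×ˢ (univ : Finset (V ⊕ E))).filter (fun p => cls tl p.2 = hd p.1)).filter
            fun p => (Sum.inr p.1 : V ⊕ E) = Sum.inl v) = ∅ := by
        intro v
        apply Finset.filter_false_of_mem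
        intro p _
        simp
      have h2 : ∀ e : E,
          ((((F ×ˢ (univ : Finset (V ⊕ E))).filter (fun p => cls tl p.2 = hd p.1)).filter
            fun p => (Sum.inr p.1 : V ⊕ E) = Sum.inr e).sup fun p => w p.1)
          = if e ∈ F then w e else 0 := by
        intro e
        split_ifs with he
        · apply le_antisymm
          · apply Finset.sup_le
            intro p hp
            have := (Finset.mem_filter.mp hp).2
            rw [Sum.inr.injEq] at this
            rw [this]
          · refine Finset.le_sup (f := fun p : E × (V ⊕ E) => w p.1)
              (b := (e, Sum.inl (hd e))) ?_
            exact Finset.mem_filter.mpr ⟨Finset.mem_filter.mpr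
              ⟨Finset.mem_product.mpr ⟨he, Finset.mem_univ _⟩, rfl⟩, rfl⟩
        · have : ((((F ×ˢ (univ : Finset (V ⊕ E))).filter (fun p => cls tl p.2 = hd p.1)).filter
              fun p => (Sum.inr p.1 : V ⊕ E) = Sum.inr e)) = ∅ := by
            apply Finset.filter_false_of_mem
            intro p hp
            intro hcontra
            rw [Sum.inr.injEq] at hcontra
            exact he (hcontra ▸ (Finset.mem_product.mp (Finset.mem_filter.mp hp).1).1)
          rw [this, Finset.sup_empty]
          rfl
      simp only [h1, h2, Finset.sup_empty]
      rw [Finset.sum_ite_mem, Finset.univ_inter]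
      simp
  -- domination
  have hdom : ∀ x ∈ S1, ∃ y ∈ S2, y ≤ x := by
    rintro x ⟨F', hcl, hreach', rfl⟩
    refine ⟨∑ e ∈ F'.image Prod.fst, w e, ⟨F'.image Prod.fst, ?_, rfl⟩, ?_⟩
    · intro d hd'
      obtain ⟨c₀, c, hc₀, hc, hr⟩ := hreach' d hd'
      have := split_to_reach tl hd F' hcl hr
      rwa [hc₀, hc] at this
    · calc ∑ e ∈ F'.image Prod.fst, w e
          = ∑ e : E, if e ∈ F'.image Prod.fst then w e else 0 := by
            rw [Finset.sum_ite_mem, Finset.univ_inter]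
        _ ≤ ∑ e : E, (F'.filter fun p => (Sum.inr p.1 : V ⊕ E) = Sum.inr e).sup
              (fun p => w p.1) := by
            apply Finset.sum_le_sum
            intro e _
            split_ifs with he
            · obtain ⟨p, hp, hpe⟩ := Finset.mem_image.mp he
              have hpf : p ∈ F'.filter fun p => (Sum.inr p.1 : V ⊕ E) = Sum.inr e :=
                Finset.mem_filter.mpr ⟨hp, by rw [hpe]⟩
              calc w e = w p.1 := by rw [hpe]
                _ ≤ _ := Finset.le_sup (f := fun p : E × (V ⊕ E) => w p.1) hpf
            · exact zero_le
        _ ≤ ∑ c : V ⊕ E, (F'.filter fun p => (Sum.inr p.1 : V ⊕ E) = c).sup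
              (fun p => w p.1) := by
            rw [Fintype.sum_sum_type]
            exact le_add_of_nonneg_left zero_le
  rcases Set.eq_empty_or_nonempty S1 with h1 | h1
  · have h2 : S2 = ∅ := Set.eq_empty_of_subset_empty (h1 ▸ hsub)
    rw [h1, h2]
  · obtain ⟨x, hx⟩ := h1
    obtain ⟨y, hy, _⟩ := hdom x hx
    apply le_antisymm
    · exact csInf_le_csInf (OrderBot.bddBelow _) ⟨y, hy⟩ hsub
    · refine le_csInf ⟨x, hx⟩ fun b hb => ?_
      obtain ⟨z, hz, hzb⟩ := hdom b hb
      exact (csInf_le (OrderBot.bddBelow _) hz).trans hzb
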